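/- Suppose (Q^v, W^v, t^v) is a maximizer of R(Q,t) over S_{Z,t}(Q', W') for some PSD Hermitian pair (Q', W'). Then the true secrecy rate at the new iterate dominates its approximate value: Cs(Q^v, W^v) ≥ R(Q^v, t^v). -/

import Mathlib

open Matrix Finset ComplexOrder

namespace SRM

/-- `log det` of a complex matrix: real logarithm of the real part of the determinant. -/
noncomputable def phik {m n : ℕ} (H P : Matrix (Fin m) (Fin n) ℂ)
    (Q W : Matrix (Fin n) (Fin n) ℂ) : ℝ :=
  Real.log ((1 + H * Q * Hᴴ + P * W * Pᴴ).det.re)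

noncomputable def phiHat {m n : ℕ} (P : Matrix (Fin m) (Fin n) ℂ)
    (W : Matrix (Fin n) (Fin n) ℂ) : ℝ :=
  Real.log ((1 + P * W * Pᴴ).det.re)

/-- The `k`-th eavesdropper rate `C_k(Q,W)`. -/
noncomputable def Ceav {m n : ℕ} (H P : Matrix (Fin m) (Fin n) ℂ)
    (Q W : Matrix (Fin n) (Fin n) ℂ) : ℝ :=
  phik H P Q W - phiHat P W

/-- The legitimate (Alice-Bob) rate `C_0(Q)`. -/
noncomputable def C0 {m n : ℕ} (H0 : Matrix (Fin m) (Fin n) ℂ)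
    (Q : Matrix (Fin n) (Fin n) ℂ) : ℝ :=
  Real.log ((1 + H0 * Q * H0ᴴ).det.re)

/-- Gradient matrix `T_k(Q',W')`. -/
noncomputable def Tmat {m n : ℕ} (H P : Matrix (Fin m) (Fin n) ℂ)
    (Q' W' : Matrix (Fin n) (Fin n) ℂ) : Matrix (Fin n) (Fin n) ℂ :=
  Hᴴ * (1 + H * Q' * Hᴴ + P * W' * Pᴴ)⁻¹ * H

/-- Gradient matrix `R_k(Q',W')`. -/
noncomputable def Rmat {m n : ℕ} (H P : Matrix (Fin m) (Fin n) ℂ)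
    (Q' W' : Matrix (Fin n) (Fin n) ℂ) : Matrix (Fin n) (Fin n) ℂ :=
  Pᴴ * (1 + H * Q' * Hᴴ + P * W' * Pᴴ)⁻¹ * P

/-- Gradient of `φ̂_k` with respect to `W`. -/
noncomputable def Dmat {m n : ℕ} (P : Matrix (Fin m) (Fin n) ℂ)
    (W : Matrix (Fin n) (Fin n) ℂ) : Matrix (Fin n) (Fin n) ℂ :=
  Pᴴ * (1 + P * W * Pᴴ)⁻¹ * P

/-- Gradient of `C_0` with respect to `Q`. -/
noncomputable def D0mat {m n : ℕ} (H0 : Matrix (Fin m) (Fin n) ℂ)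
    (Q : Matrix (Fin n) (Fin n) ℂ) : Matrix (Fin n) (Fin n) ℂ :=
  H0ᴴ * (1 + H0 * Q * H0ᴴ)⁻¹ * H0

/-- First-order (linear) approximation `φ̄_k(Q,W | Q',W')` of `φ_k` around `(Q',W')`. -/
noncomputable def phiBar {m n : ℕ} (H P : Matrix (Fin m) (Fin n) ℂ)
    (Q W Q' W' : Matrix (Fin n) (Fin n) ℂ) : ℝ :=
  phik H P Q' W' + ((Tmat H P Q' W' * (Q - Q')).trace).re
    + ((Rmat H P Q' W' * (W - W')).trace).re

/-- Convexified eavesdropper rate `C_{lk}(Q,W | Q',W')`. -/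
noncomputable def Clk {m n : ℕ} (H P : Matrix (Fin m) (Fin n) ℂ)
    (Q W Q' W' : Matrix (Fin n) (Fin n) ℂ) : ℝ :=
  phiBar H P Q W Q' W' - phiHat P W

/-- Secrecy rate `C_s(Q,W) = C_0(Q) - max_k C_k(Q,W)`. -/
noncomputable def Cs {m0 n : ℕ} {K : Type*} [Fintype K] [Nonempty K] {mk : K → ℕ}
    (H0 : Matrix (Fin m0) (Fin n) ℂ)
    (Hm Pm : (k : K) → Matrix (Fin (mk k)) (Fin n) ℂ)
    (Q W : Matrix (Fin n) (Fin n) ℂ) : ℝ :=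
  C0 H0 Q - Finset.univ.sup' Finset.univ_nonempty (fun k => Ceav (Hm k) (Pm k) Q W)

/-- The feasible set `S_Z`. -/
def SZ {mg n : ℕ} (G : Matrix (Fin mg) (Fin n) ℂ) (V : Matrix (Fin n) (Fin n) ℂ)
    (Pmax Γ : ℝ) : Set (Matrix (Fin n) (Fin n) ℂ × Matrix (Fin n) (Fin n) ℂ) :=
  {Z | Z.1.PosSemidef ∧ Z.2.PosSemidef ∧
    ((G * Z.1 * Gᴴ + G * V * Z.2 * Vᴴ * Gᴴ).trace).re ≤ Γ ∧
    ((Z.1 + Z.2).trace).re ≤ Pmax}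

/-- The approximate feasible set `S_{Z,t}(Q',W')`. -/
def SZt {mg n : ℕ} {K : Type*} [Fintype K] {mk : K → ℕ}
    (G : Matrix (Fin mg) (Fin n) ℂ) (V : Matrix (Fin n) (Fin n) ℂ) (Pmax Γ : ℝ)
    (Hm Pm : (k : K) → Matrix (Fin (mk k)) (Fin n) ℂ)
    (Q' W' : Matrix (Fin n) (Fin n) ℂ) :
    Set ((Matrix (Fin n) (Fin n) ℂ × Matrix (Fin n) (Fin n) ℂ) × ℝ) :=
  {x | x.1 ∈ SZ G V Pmax Γ ∧ ∀ k : K, Clk (Hm k) (Pm k) x.1.1 x.1.2 Q' W' ≤ x.2}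

/-- The objective `R(Q,t) = C_0(Q) - t`. -/
noncomputable def Robj {m0 n : ℕ} (H0 : Matrix (Fin m0) (Fin n) ℂ)
    (Q : Matrix (Fin n) (Fin n) ℂ) (t : ℝ) : ℝ :=
  C0 H0 Q - t

end SRM

namespace SRM

/-- log det ≤ trace - n for complex PosDef matrices. -/
lemma logdet_le_trace {n : ℕ} {M : Matrix (Fin n) (Fin n) ℂ} (hM : M.PosDef) :
    Real.log M.det.re ≤ M.trace.re - n := by
  have hH := hM.isHermitian
  have hdet : M.det = ((∏ i, hH.eigenvalues i : ℝ) : ℂ) := by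
    rw [hH.det_eq_prod_eigenvalues]; push_cast; rfl
  have htr : M.trace = ((∑ i, hH.eigenvalues i : ℝ) : ℂ) := by
    conv_lhs => rw [hH.spectral_theorem, Unitary.conjStarAlgAut_apply]
    rw [trace_mul_cycle]
    rw [show (star (hH.eigenvectorUnitary : Matrix (Fin n) (Fin n) ℂ)) *
        (hH.eigenvectorUnitary : Matrix (Fin n) (Fin n) ℂ) = 1 from
      Unitary.coe_star_mul_self _, one_mul, trace_diagonal]
    push_cast; rfl
  have hpos : ∀ i, 0 < hH.eigenvalues i := hM.eigenvalues_pos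
  rw [hdet, htr, Complex.ofReal_re, Complex.ofReal_re]
  rw [Real.log_prod (fun i _ => (hpos i).ne')]
  calc ∑ i, Real.log (hH.eigenvalues i)
      ≤ ∑ i, (hH.eigenvalues i - 1) :=
        Finset.sum_le_sum fun i _ => Real.log_le_sub_one_of_pos (hpos i)
    _ = (∑ i, hH.eigenvalues i) - n := by
        rw [Finset.sum_sub_distrib]; simp

lemma posDef_conj {n : ℕ} {B C : Matrix (Fin n) (Fin n) ℂ}
    (hB : B.PosDef) (hC : IsUnit C.det) : (C * B * Cᴴ).PosDef := by
  refine Matrix.PosDef.of_dotProduct_mulVec_pos ?_ fun x hx => ?_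
  · unfold Matrix.IsHermitian
    rw [conjTranspose_mul, conjTranspose_mul, conjTranspose_conjTranspose,
      hB.isHermitian.eq, mul_assoc]
  · have hy : Cᴴ *ᵥ x ≠ 0 := by
      intro h
      apply hx
      have hCH : IsUnit Cᴴ := (Matrix.isUnit_iff_isUnit_det _).mpr
        (by rwa [det_conjTranspose, isUnit_star])
      exact (Matrix.mulVec_injective_iff_isUnit.mpr hCH).eq_iff.mp (by simp [h])
    have key : star x ⬝ᵥ ((C * B * Cᴴ) *ᵥ x) = star (Cᴴ *ᵥ x) ⬝ᵥ (B *ᵥ (Cᴴ *ᵥ x)) := by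
      rw [star_mulVec, conjTranspose_conjTranspose, ← mulVec_mulVec, ← mulVec_mulVec,
        dotProduct_mulVec, dotProduct_mulVec]
    rw [key]
    exact hB.dotProduct_mulVec_pos hy

open scoped MatrixOrder in
lemma logdet_concave {n : ℕ} {A B : Matrix (Fin n) (Fin n) ℂ}
    (hA : A.PosDef) (hB : B.PosDef) :
    Real.log B.det.re ≤ Real.log A.det.re + ((A⁻¹ * (B - A)).trace).re := by
  have ha : (0 : ℂ) < A.det := hA.det_pos
  have hb : (0 : ℂ) < B.det := hB.det_pos
  have haRe : 0 < A.det.re := (Complex.lt_def.mp ha).1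
  have hbRe : 0 < B.det.re := (Complex.lt_def.mp hb).1
  have haIm : A.det.im = 0 := ((Complex.lt_def.mp ha).2).symm
  have hbIm : B.det.im = 0 := ((Complex.lt_def.mp hb).2).symm
  have hadet : A.det ≠ 0 := ne_of_gt ha
  set S := CFC.sqrt A with hSdef
  have hS : S.PosSemidef := (CFC.sqrt_nonneg A).posSemidef
  have hSS : S * S = A := CFC.sqrt_mul_sqrt_self A hA.posSemidef.nonneg
  have hSdet : S.det ≠ 0 := by
    intro h
    apply hadet
    rw [← hSS, det_mul, h, mul_zero]
  have hSinvH : (S⁻¹).IsHermitian := hS.isHermitian.inv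
  have hSinvdet : (S⁻¹).det ≠ 0 := by
    rw [Matrix.det_nonsing_inv, Ring.inverse_eq_inv']
    exact inv_ne_zero hSdet
  have hSinvSinv : S⁻¹ * S⁻¹ = A⁻¹ := by rw [← Matrix.mul_inv_rev, hSS]
  have hN : (S⁻¹ * B * S⁻¹).PosDef := by
    have := posDef_conj hB (isUnit_iff_ne_zero.mpr hSinvdet)
    rwa [hSinvH.eq] at this
  have hNdet : (S⁻¹ * B * S⁻¹).det = B.det * (A.det)⁻¹ := by
    rw [det_mul, det_mul, mul_comm (S⁻¹).det B.det, mul_assoc, ← det_mul, hSinvSinv,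
      Matrix.det_nonsing_inv, Ring.inverse_eq_inv']
  have hNtr : (S⁻¹ * B * S⁻¹).trace = (A⁻¹ * B).trace := by
    rw [trace_mul_comm, ← mul_assoc, hSinvSinv]
  have key := logdet_le_trace hN
  rw [hNdet, hNtr] at key
  have hAre : A.det = (A.det.re : ℂ) := Complex.ext rfl (by simp [haIm])
  have hBre : B.det = (B.det.re : ℂ) := Complex.ext rfl (by simp [hbIm])
  have hdiv : (B.det * (A.det)⁻¹).re = B.det.re / A.det.re := by
    rw [hAre, hBre, ← Complex.ofReal_inv, ← Complex.ofReal_mul, Complex.ofReal_re,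
      div_eq_mul_inv]
    simp
  rw [hdiv, Real.log_div (ne_of_gt hbRe) (ne_of_gt haRe)] at key
  have htr : ((A⁻¹ * (B - A)).trace).re = ((A⁻¹ * B).trace).re - n := by
    rw [mul_sub, Matrix.nonsing_inv_mul A hadet.isUnit]
    rw [Matrix.trace_sub]
    simp [Matrix.trace_one]
  rw [htr]
  linarith

lemma phik_le_phiBar {m n : ℕ} (H P : Matrix (Fin m) (Fin n) ℂ)
    {Q W Q' W' : Matrix (Fin n) (Fin n) ℂ}
    (hQ : Q.PosSemidef) (hW : W.PosSemidef) (hQ' : Q'.PosSemidef) (hW' : W'.PosSemidef) :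
    phik H P Q W ≤ phiBar H P Q W Q' W' := by
  set A := 1 + H * Q' * Hᴴ + P * W' * Pᴴ with hAdef
  set B := 1 + H * Q * Hᴴ + P * W * Pᴴ with hBdef
  have hA : A.PosDef :=
    (Matrix.PosDef.one.add_posSemidef (hQ'.mul_mul_conjTranspose_same H)).add_posSemidef
      (hW'.mul_mul_conjTranspose_same P)
  have hB : B.PosDef :=
    (Matrix.PosDef.one.add_posSemidef (hQ.mul_mul_conjTranspose_same H)).add_posSemidef
      (hW.mul_mul_conjTranspose_same P)
  have hdiff : B - A = H * (Q - Q') * Hᴴ + P * (W - W') * Pᴴ := by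
    rw [hAdef, hBdef]
    simp only [Matrix.mul_sub, Matrix.sub_mul]
    abel
  have h1 : (Tmat H P Q' W' * (Q - Q')).trace = (A⁻¹ * (H * (Q - Q') * Hᴴ)).trace := by
    unfold Tmat
    rw [← hAdef]
    calc (Hᴴ * A⁻¹ * H * (Q - Q')).trace
        = (Hᴴ * (A⁻¹ * H * (Q - Q'))).trace := by simp only [Matrix.mul_assoc]
      _ = ((A⁻¹ * H * (Q - Q')) * Hᴴ).trace := Matrix.trace_mul_comm _ _
      _ = (A⁻¹ * (H * (Q - Q') * Hᴴ)).trace := by simp only [Matrix.mul_assoc]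
  have h2 : (Rmat H P Q' W' * (W - W')).trace = (A⁻¹ * (P * (W - W') * Pᴴ)).trace := by
    unfold Rmat
    rw [← hAdef]
    calc (Pᴴ * A⁻¹ * P * (W - W')).trace
        = (Pᴴ * (A⁻¹ * P * (W - W'))).trace := by simp only [Matrix.mul_assoc]
      _ = ((A⁻¹ * P * (W - W')) * Pᴴ).trace := Matrix.trace_mul_comm _ _
      _ = (A⁻¹ * (P * (W - W') * Pᴴ)).trace := by simp only [Matrix.mul_assoc]
  have htr : (A⁻¹ * (B - A)).trace
      = (Tmat H P Q' W' * (Q - Q')).trace + (Rmat H P Q' W' * (W - W')).trace := by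
    rw [h1, h2, hdiff, mul_add, Matrix.trace_add]
  have key := logdet_concave hA hB
  rw [htr, Complex.add_re] at key
  unfold phiBar phik
  rw [← hAdef, ← hBdef]
  linarith

end SRM

namespace SRM

/-- at a maximizer of `R(Q,t)` over `S_{Z,t}(Q',W')`, the true secrecy
rate dominates the approximate value: `C_s(Q^v,W^v) ≥ R(Q^v,t^v)`. -/
theorem Robj_le_Cs_at_max {n mg m0 : ℕ} {K : Type*} [Fintype K] [Nonempty K] {mk : K → ℕ} (hn : 0 < n)
    (H0 : Matrix (Fin m0) (Fin n) ℂ)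
    (G : Matrix (Fin mg) (Fin n) ℂ) (V : Matrix (Fin n) (Fin n) ℂ)
    (Pmax Γ : ℝ) (hPmax : 0 ≤ Pmax) (hΓ : 0 ≤ Γ)
    (Hm Pm : (k : K) → Matrix (Fin (mk k)) (Fin n) ℂ)
    (Q' W' : Matrix (Fin n) (Fin n) ℂ) (hQ' : Q'.PosSemidef) (hW' : W'.PosSemidef)
    (Qv Wv : Matrix (Fin n) (Fin n) ℂ) (tv : ℝ)
    (hmem : ((Qv, Wv), tv) ∈ SZt G V Pmax Γ Hm Pm Q' W')
    (hmax : ∀ x ∈ SZt G V Pmax Γ Hm Pm Q' W', Robj H0 x.1.1 x.2 ≤ Robj H0 Qv tv) :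
    Robj H0 Qv tv ≤ Cs H0 Hm Pm Qv Wv := by
  obtain ⟨⟨hQv, hWv, -, -⟩, hClk⟩ := hmem
  have hkey : ∀ k : K, Ceav (Hm k) (Pm k) Qv Wv ≤ tv := by
    intro k
    have h1 := hClk k
    have h2 := phik_le_phiBar (Hm k) (Pm k) hQv hWv hQ' hW'
    unfold Ceav
    unfold Clk at h1
    linarith
  have hsup : Finset.univ.sup' Finset.univ_nonempty
      (fun k => Ceav (Hm k) (Pm k) Qv Wv) ≤ tv :=
    Finset.sup'_le _ _ (fun k _ => hkey k)
  unfold Robj Cs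
  linarith

end SRM
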